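/- Let A, B, C, D ∈ M_n(ℝ) be symmetric positive definite matrices such that A commutes with C and B commutes with D. If B − A is positive definite and D − C is positive semidefinite, then √(BD) − √(AC) is positive definite. (Here AC and BD are symmetric positive definite since they are products of commuting symmetric positive definite matrices.) -/

import Mathlib

open Matrix

noncomputable section

/-- The positive semidefinite square root of a positive semidefinite matrix
(removed from Mathlib; restored here with its former definition). -/
def Matrix.PosSemidef.sqrt {n : Type*} {𝕜 : Type*} [Fintype n] [DecidableEq n] [RCLike 𝕜] [PartialOrder 𝕜]
    {A : Matrix n n 𝕜} (hA : A.PosSemidef) : Matrix n n 𝕜 :=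
  hA.1.eigenvectorUnitary.1 * diagonal ((↑) ∘ (√·) ∘ hA.1.eigenvalues) *
    (star hA.1.eigenvectorUnitary : Matrix n n 𝕜)

variable {n : ℕ}

/-- Conjugation preserves positive definiteness. -/
lemma my_conj_posDef {M U : Matrix (Fin n) (Fin n) ℝ} (hM : M.PosDef) (hU : IsUnit U) :
    (U * M * Uᴴ).PosDef := by
  refine PosDef.of_dotProduct_mulVec_pos ?_ fun x hx => ?_
  · show (U * M * Uᴴ)ᴴ = U * M * Uᴴ
    rw [conjTranspose_mul, conjTranspose_mul, conjTranspose_conjTranspose, hM.isHermitian.eq,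
      mul_assoc]
  · have hrew : star x ⬝ᵥ (U * M * Uᴴ) *ᵥ x = star (Uᴴ *ᵥ x) ⬝ᵥ M *ᵥ (Uᴴ *ᵥ x) := by
      rw [star_mulVec, conjTranspose_conjTranspose, ← mulVec_mulVec, ← mulVec_mulVec,
        dotProduct_mulVec]
    rw [hrew]
    refine hM.dotProduct_mulVec_pos fun h0 => hx ?_
    have hUc : IsUnit Uᴴ := by
      rw [Matrix.isUnit_iff_isUnit_det] at hU ⊢
      rwa [det_conjTranspose, star_trivial]
    have hinj : Function.Injective (Uᴴ).mulVec := mulVec_injective_iff_isUnit.mpr hUc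
    exact hinj (by simpa using h0)
noncomputable section
variable {n : ℕ}

lemma my_star_triv (x : Fin n → ℝ) : star x = x := funext fun i => star_trivial _

lemma my_posDef_of_eigenvalues_pos {M : Matrix (Fin n) (Fin n) ℝ} (hM : M.IsHermitian)
    (h : ∀ i, 0 < hM.eigenvalues i) : M.PosDef := by
  rw [hM.spectral_theorem]
  have hd : (diagonal (RCLike.ofReal ∘ hM.eigenvalues) : Matrix (Fin n) (Fin n) ℝ).PosDef := by
    refine Matrix.PosDef.diagonal fun i => ?_
    simpa using h i
  have hU : IsUnit (hM.eigenvectorUnitary : Matrix (Fin n) (Fin n) ℝ) :=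
    ⟨⟨_, star (hM.eigenvectorUnitary : Matrix (Fin n) (Fin n) ℝ),
      (Matrix.mem_unitaryGroup_iff).mp hM.eigenvectorUnitary.2,
      (Matrix.mem_unitaryGroup_iff').mp hM.eigenvectorUnitary.2⟩, rfl⟩
  simpa [Matrix.star_eq_conjTranspose] using my_conj_posDef hd hU

lemma my_commute_conj {V X Y : Matrix (Fin n) (Fin n) ℝ} (hV1 : V * star V = 1)
    (hV2 : star V * V = 1) (h : (star V * X * V) * Y = Y * (star V * X * V)) :
    X * (V * Y * star V) = (V * Y * star V) * X := by
  have e1 : V * ((star V * X * V) * Y) * star V = X * (V * Y * star V) := by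
    calc V * ((star V * X * V) * Y) * star V
        = (V * star V) * X * (V * Y * star V) := by noncomm_ring
      _ = X * (V * Y * star V) := by rw [hV1]; noncomm_ring
  have e2 : V * (Y * (star V * X * V)) * star V = (V * Y * star V) * X := by
    calc V * (Y * (star V * X * V)) * star V
        = (V * Y * star V) * X * (V * star V) := by noncomm_ring
      _ = (V * Y * star V) * X := by rw [hV1]; noncomm_ring
  rw [← e1, ← e2, h]

lemma my_conj_commute {V X Y : Matrix (Fin n) (Fin n) ℝ} (hV1 : V * star V = 1)
    (hV2 : star V * V = 1) (h : X * (V * Y * star V) = (V * Y * star V) * X) :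
    (star V * X * V) * Y = Y * (star V * X * V) := by
  have e1 : star V * (X * (V * Y * star V)) * V = (star V * X * V) * Y := by
    calc star V * (X * (V * Y * star V)) * V
        = ((star V * X * V) * Y) * (star V * V) := by noncomm_ring
      _ = (star V * X * V) * Y := by rw [hV2]; noncomm_ring
  have e2 : star V * ((V * Y * star V) * X) * V = Y * (star V * X * V) := by
    calc star V * ((V * Y * star V) * X) * V
        = (star V * V) * (Y * (star V * X * V)) := by noncomm_ring
      _ = Y * (star V * X * V) := by rw [hV2]; noncomm_ring
  rw [← e1, ← e2, h]

lemma Matrix.PosSemidef.posSemidef_sqrt {A : Matrix (Fin n) (Fin n) ℝ} (hA : A.PosSemidef) :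
    hA.sqrt.PosSemidef := by
  have := (PosSemidef.diagonal (R := ℝ) (n := Fin n)
    (d := (RCLike.ofReal ∘ Real.sqrt ∘ hA.1.eigenvalues)) (fun i => Real.sqrt_nonneg _)
    ).mul_mul_conjTranspose_same (hA.1.eigenvectorUnitary : Matrix (Fin n) (Fin n) ℝ)
  exact this

lemma Matrix.PosSemidef.sqrt_mul_self {A : Matrix (Fin n) (Fin n) ℝ} (hA : A.PosSemidef) :
    hA.sqrt * hA.sqrt = A := by
  have hV2 : star (hA.1.eigenvectorUnitary : Matrix (Fin n) (Fin n) ℝ) *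
      (hA.1.eigenvectorUnitary : Matrix (Fin n) (Fin n) ℝ) = 1 :=
    (Matrix.mem_unitaryGroup_iff').mp hA.1.eigenvectorUnitary.2
  have hE : diagonal (RCLike.ofReal ∘ Real.sqrt ∘ hA.1.eigenvalues) *
      diagonal (RCLike.ofReal ∘ Real.sqrt ∘ hA.1.eigenvalues) =
      (diagonal (RCLike.ofReal ∘ hA.1.eigenvalues) : Matrix (Fin n) (Fin n) ℝ) := by
    rw [diagonal_mul_diagonal]; congr 1; funext i
    simp only [Function.comp_apply, RCLike.ofReal_real_eq_id, id_eq]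
    exact Real.mul_self_sqrt (hA.eigenvalues_nonneg i)
  have hspec : A = (hA.1.eigenvectorUnitary : Matrix (Fin n) (Fin n) ℝ) *
      diagonal (RCLike.ofReal ∘ hA.1.eigenvalues) *
      star (hA.1.eigenvectorUnitary : Matrix (Fin n) (Fin n) ℝ) := hA.1.spectral_theorem
  set U := (hA.1.eigenvectorUnitary : Matrix (Fin n) (Fin n) ℝ)
  set E := (diagonal (RCLike.ofReal ∘ Real.sqrt ∘ hA.1.eigenvalues) : Matrix (Fin n) (Fin n) ℝ)
  show U * E * star U * (U * E * star U) = A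
  calc U * E * star U * (U * E * star U) = U * E * (star U * U) * E * star U := by noncomm_ring
  _ = U * (E * E) * star U := by rw [hV2]; noncomm_ring
  _ = A := by rw [hE]; exact hspec.symm

lemma my_commute_diag {M : Matrix (Fin n) (Fin n) ℝ} {d e : Fin n → ℝ}
    (hde : ∀ i j, d i = d j → e i = e j) (h : M * diagonal d = diagonal d * M) :
    M * diagonal e = diagonal e * M := by
  ext i j
  have hk : M i j * d j = d i * M i j := by
    simpa [Matrix.mul_diagonal, Matrix.diagonal_mul] using congrFun (congrFun h i) j
  rw [Matrix.mul_diagonal, Matrix.diagonal_mul]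
  rcases eq_or_ne (d i) (d j) with hij | hij
  · rw [hde i j hij, mul_comm]
  · have hM0 : M i j = 0 := by
      rcases mul_eq_zero.mp (show (d j - d i) * M i j = 0 by rw [mul_comm] at hk; ring_nf; linarith) with h0 | h0
      · exact absurd (sub_eq_zero.mp h0).symm hij
      · exact h0
    simp [hM0]

lemma my_commute_sqrt {A X : Matrix (Fin n) (Fin n) ℝ} (hA : A.PosSemidef)
    (h : X * A = A * X) : X * hA.sqrt = hA.sqrt * X := by
  have hV1 : (hA.1.eigenvectorUnitary : Matrix (Fin n) (Fin n) ℝ) *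
      star (hA.1.eigenvectorUnitary : Matrix (Fin n) (Fin n) ℝ) = 1 :=
    (Matrix.mem_unitaryGroup_iff).mp hA.1.eigenvectorUnitary.2
  have hV2 : star (hA.1.eigenvectorUnitary : Matrix (Fin n) (Fin n) ℝ) *
      (hA.1.eigenvectorUnitary : Matrix (Fin n) (Fin n) ℝ) = 1 :=
    (Matrix.mem_unitaryGroup_iff').mp hA.1.eigenvectorUnitary.2
  have hsq : hA.sqrt = (hA.1.eigenvectorUnitary : Matrix (Fin n) (Fin n) ℝ) *
      diagonal (RCLike.ofReal ∘ Real.sqrt ∘ hA.1.eigenvalues) *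
      star (hA.1.eigenvectorUnitary : Matrix (Fin n) (Fin n) ℝ) := rfl
  have hspec : A = (hA.1.eigenvectorUnitary : Matrix (Fin n) (Fin n) ℝ) *
      diagonal (RCLike.ofReal ∘ hA.1.eigenvalues) *
      star (hA.1.eigenvectorUnitary : Matrix (Fin n) (Fin n) ℝ) := hA.1.spectral_theorem
  rw [hsq]
  refine my_commute_conj hV1 hV2 ?_
  refine my_commute_diag (d := RCLike.ofReal ∘ hA.1.eigenvalues) (fun i j hij => ?_) ?_
  · simp only [Function.comp_apply, RCLike.ofReal_real_eq_id, id_eq] at hij ⊢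
    rw [hij]
  · refine my_conj_commute hV1 hV2 ?_
    rw [← hspec]
    exact h

lemma my_posDef_of_sq {S : Matrix (Fin n) (Fin n) ℝ} (hS : S.PosSemidef)
    (h2 : (S * S).PosDef) : S.PosDef := by
  refine PosDef.of_dotProduct_mulVec_pos hS.1 fun x hx => ?_
  rcases (hS.dotProduct_mulVec_nonneg x).lt_or_eq with hlt | heq
  · exact hlt
  · exfalso
    have h0 : S *ᵥ x = 0 := (hS.dotProduct_mulVec_zero_iff x).mp heq.symm
    have := h2.dotProduct_mulVec_pos hx
    rw [← mulVec_mulVec, h0, mulVec_zero, dotProduct_zero] at this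
    exact lt_irrefl 0 this

lemma my_quad_identity {S T : Matrix (Fin n) (Fin n) ℝ} (hM : (S - T).IsHermitian)
    {v : Fin n → ℝ} {t : ℝ} (heig : (S - T) *ᵥ v = t • v) :
    v ⬝ᵥ (S * S - T * T) *ᵥ v = t * (v ⬝ᵥ S *ᵥ v + v ⬝ᵥ T *ᵥ v) := by
  have hMt : (S - T)ᵀ = S - T := by
    have := hM.eq
    rwa [Matrix.conjTranspose_eq_transpose_of_trivial] at this
  have hid : S * S - T * T = S * (S - T) + (S - T) * T := by noncomm_ring
  have h1 : v ⬝ᵥ (S * (S - T)) *ᵥ v = t * (v ⬝ᵥ S *ᵥ v) := by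
    rw [← mulVec_mulVec, heig, mulVec_smul, dotProduct_smul]
    rfl
  have h2 : v ⬝ᵥ ((S - T) * T) *ᵥ v = t * (v ⬝ᵥ T *ᵥ v) := by
    rw [← mulVec_mulVec, dotProduct_mulVec, ← mulVec_transpose, hMt, heig, smul_dotProduct]
    rfl
  rw [hid, add_mulVec, dotProduct_add, h1, h2, mul_add]

lemma my_sub_posDef_of_sq {S T : Matrix (Fin n) (Fin n) ℝ} (hS : S.PosSemidef)
    (hT : T.PosSemidef) (h : (S * S - T * T).PosDef) : (S - T).PosDef := by
  have hM : (S - T).IsHermitian := hS.1.sub hT.1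
  refine my_posDef_of_eigenvalues_pos hM fun i => ?_
  by_contra hneg
  push_neg at hneg
  set t := hM.eigenvalues i with ht
  set v : Fin n → ℝ := ⇑(hM.eigenvectorBasis i) with hv
  have hv0 : v ≠ 0 := by
    intro hcontra
    exact hM.eigenvectorBasis.orthonormal.ne_zero i (by ext j; exact congrFun hcontra j)
  have heig : (S - T) *ᵥ v = t • v := hM.mulVec_eigenvectorBasis i
  have hq : 0 < v ⬝ᵥ (S * S - T * T) *ᵥ v := by
    have := h.dotProduct_mulVec_pos hv0; rwa [my_star_triv] at this
  have hSv : 0 ≤ v ⬝ᵥ S *ᵥ v := by have := hS.dotProduct_mulVec_nonneg v; rwa [my_star_triv] at this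
  have hTv : 0 ≤ v ⬝ᵥ T *ᵥ v := by have := hT.dotProduct_mulVec_nonneg v; rwa [my_star_triv] at this
  rw [my_quad_identity hM heig] at hq
  nlinarith

lemma my_sub_posSemidef_of_sq {S T : Matrix (Fin n) (Fin n) ℝ} (hS : S.PosSemidef)
    (hT : T.PosSemidef) (h : (S * S - T * T).PosSemidef) : (S - T).PosSemidef := by
  have hM : (S - T).IsHermitian := hS.1.sub hT.1
  refine hM.posSemidef_iff_eigenvalues_nonneg.mpr fun i => ?_
  by_contra hneg
  push_neg at hneg
  simp only [Pi.zero_apply] at hneg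
  set t := hM.eigenvalues i with ht
  set v : Fin n → ℝ := ⇑(hM.eigenvectorBasis i) with hv
  have hv0 : v ≠ 0 := by
    intro hcontra
    exact hM.eigenvectorBasis.orthonormal.ne_zero i (by ext j; exact congrFun hcontra j)
  have heig : (S - T) *ᵥ v = t • v := hM.mulVec_eigenvectorBasis i
  have hq : 0 ≤ v ⬝ᵥ (S * S - T * T) *ᵥ v := by
    have := h.dotProduct_mulVec_nonneg v; rwa [my_star_triv] at this
  have hSv : 0 ≤ v ⬝ᵥ S *ᵥ v := by have := hS.dotProduct_mulVec_nonneg v; rwa [my_star_triv] at this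
  have hTv : 0 ≤ v ⬝ᵥ T *ᵥ v := by have := hT.dotProduct_mulVec_nonneg v; rwa [my_star_triv] at this
  rw [my_quad_identity hM heig] at hq
  have hsum : v ⬝ᵥ S *ᵥ v = 0 ∧ v ⬝ᵥ T *ᵥ v = 0 := by constructor <;> nlinarith
  have hS0 : S *ᵥ v = 0 := (hS.dotProduct_mulVec_zero_iff v).mp (by rw [my_star_triv]; exact hsum.1)
  have hT0 : T *ᵥ v = 0 := (hT.dotProduct_mulVec_zero_iff v).mp (by rw [my_star_triv]; exact hsum.2)
  have : t • v = 0 := by rw [← heig, sub_mulVec, hS0, hT0, sub_zero]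
  rcases smul_eq_zero.mp this with h0 | h0
  · exact absurd h0 (ne_of_lt hneg)
  · exact hv0 h0

lemma Matrix.PosSemidef.eq_sqrt_of_sq_eq {A B : Matrix (Fin n) (Fin n) ℝ} (hA : A.PosSemidef)
    (hB : B.PosSemidef) (hAB : A ^ 2 = B) : A = hB.sqrt := by
  have hS := hB.posSemidef_sqrt
  have e : A * A - hB.sqrt * hB.sqrt = 0 := by rw [hB.sqrt_mul_self, ← pow_two, hAB, sub_self]
  have e' : hB.sqrt * hB.sqrt - A * A = 0 := by rw [hB.sqrt_mul_self, ← pow_two, hAB, sub_self]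
  have h1 := my_sub_posSemidef_of_sq hA hS (by rw [e]; exact PosSemidef.zero)
  have h2 := my_sub_posSemidef_of_sq hS hA (by rw [e']; exact PosSemidef.zero)
  have hz : ∀ x, (A - hB.sqrt) *ᵥ x = 0 := fun x => by
    refine (h1.dotProduct_mulVec_zero_iff x).mp (le_antisymm ?_ (h1.dotProduct_mulVec_nonneg x))
    have := h2.dotProduct_mulVec_nonneg x
    rw [← neg_sub, neg_mulVec, dotProduct_neg] at this
    linarith
  rw [← sub_eq_zero]
  ext i j
  simpa using congrFun (hz (Pi.single j 1)) i

lemma my_sqrt_posDef {A : Matrix (Fin n) (Fin n) ℝ} (hA : A.PosDef) :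
    (hA.posSemidef.sqrt).PosDef := by
  refine my_posDef_of_sq hA.posSemidef.posSemidef_sqrt ?_
  rw [hA.posSemidef.sqrt_mul_self]
  exact hA

lemma my_mul_posSemidef {X Y : Matrix (Fin n) (Fin n) ℝ} (hX : X.PosSemidef)
    (hY : Y.PosSemidef) (h : X * Y = Y * X) : (X * Y).PosSemidef := by
  have hc : Y * hX.sqrt = hX.sqrt * Y := my_commute_sqrt hX h.symm
  have key : X * Y = hX.sqrt * Y * hX.sqrtᴴ := by
    rw [hX.posSemidef_sqrt.1]
    calc X * Y = (hX.sqrt * hX.sqrt) * Y := by rw [hX.sqrt_mul_self]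
    _ = hX.sqrt * (Y * hX.sqrt) := by rw [hc]; noncomm_ring
    _ = hX.sqrt * Y * hX.sqrt := by noncomm_ring
  rw [key]
  exact hY.mul_mul_conjTranspose_same hX.sqrt

/-- If `R` and `S` are positive (semi)definite solutions of Riccati equations
`R * D⁻¹ * R = A`, `S * D⁻¹ * S = B` with `D` positive definite and `B - A`
positive definite, then `S - R` is positive definite. -/
lemma my_riccati_strict {D R S A B : Matrix (Fin n) (Fin n) ℝ} (hD : D.PosDef)
    (hR : R.PosSemidef) (hS : S.PosSemidef)
    (hRA : R * D⁻¹ * R = A) (hSB : S * D⁻¹ * S = B) (hBA : (B - A).PosDef) :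
    (S - R).PosDef := by
  have hDi : (D⁻¹).PosDef := hD.inv
  set L := hDi.posSemidef.sqrt with hLdef
  have hL : L.PosDef := my_sqrt_posDef hDi
  have hLh : Lᴴ = L := hL.isHermitian.eq
  have hLL : L * L = D⁻¹ := hDi.posSemidef.sqrt_mul_self
  have hLu : IsUnit L := hL.isUnit
  have hP : (L * R * L).PosSemidef := by
    have := hR.mul_mul_conjTranspose_same L
    rwa [hLh] at this
  have hQ : (L * S * L).PosSemidef := by
    have := hS.mul_mul_conjTranspose_same L
    rwa [hLh] at this
  have hsq : (L * S * L) * (L * S * L) - (L * R * L) * (L * R * L) = L * (B - A) * L := by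
    have e1 : (L * S * L) * (L * S * L) = L * (S * D⁻¹ * S) * L := by
      rw [← hLL]; noncomm_ring
    have e2 : (L * R * L) * (L * R * L) = L * (R * D⁻¹ * R) * L := by
      rw [← hLL]; noncomm_ring
    rw [e1, e2, hSB, hRA]; noncomm_ring
  have hQP : ((L * S * L) - (L * R * L)).PosDef := by
    refine my_sub_posDef_of_sq hQ hP ?_
    rw [hsq]
    have := my_conj_posDef hBA hLu
    rwa [hLh] at this
  have hLiu : IsUnit L.det := by rwa [Matrix.isUnit_iff_isUnit_det] at hLu
  have hback : S - R = L⁻¹ * ((L * S * L) - (L * R * L)) * L⁻¹ := by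
    rw [Matrix.mul_sub, Matrix.sub_mul]
    congr 1
    · calc S = (L⁻¹ * L) * S * (L * L⁻¹) := by
            rw [Matrix.nonsing_inv_mul _ hLiu, Matrix.mul_nonsing_inv _ hLiu]; noncomm_ring
      _ = L⁻¹ * (L * S * L) * L⁻¹ := by noncomm_ring
    · calc R = (L⁻¹ * L) * R * (L * L⁻¹) := by
            rw [Matrix.nonsing_inv_mul _ hLiu, Matrix.mul_nonsing_inv _ hLiu]; noncomm_ring
      _ = L⁻¹ * (L * R * L) * L⁻¹ := by noncomm_ring
  rw [hback]
  have hLinv : (L⁻¹).PosDef := hL.inv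
  have := my_conj_posDef hQP hLinv.isUnit
  rwa [hLinv.isHermitian.eq] at this


lemma my_riccati_mono {D R S A B : Matrix (Fin n) (Fin n) ℝ} (hD : D.PosDef)
    (hR : R.PosSemidef) (hS : S.PosSemidef)
    (hRA : R * D⁻¹ * R = A) (hSB : S * D⁻¹ * S = B) (hBA : (B - A).PosSemidef) :
    (S - R).PosSemidef := by
  have hDi : (D⁻¹).PosDef := hD.inv
  set L := hDi.posSemidef.sqrt with hLdef
  have hL : L.PosDef := my_sqrt_posDef hDi
  have hLh : Lᴴ = L := hL.isHermitian.eq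
  have hLL : L * L = D⁻¹ := hDi.posSemidef.sqrt_mul_self
  have hP : (L * R * L).PosSemidef := by
    have := hR.mul_mul_conjTranspose_same L
    rwa [hLh] at this
  have hQ : (L * S * L).PosSemidef := by
    have := hS.mul_mul_conjTranspose_same L
    rwa [hLh] at this
  have hsq : (L * S * L) * (L * S * L) - (L * R * L) * (L * R * L) = L * (B - A) * L := by
    have e1 : (L * S * L) * (L * S * L) = L * (S * D⁻¹ * S) * L := by
      rw [← hLL]; noncomm_ring
    have e2 : (L * R * L) * (L * R * L) = L * (R * D⁻¹ * R) * L := by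
      rw [← hLL]; noncomm_ring
    rw [e1, e2, hSB, hRA]; noncomm_ring
  have hQP : ((L * S * L) - (L * R * L)).PosSemidef := by
    refine my_sub_posSemidef_of_sq hQ hP ?_
    rw [hsq]
    have := hBA.mul_mul_conjTranspose_same L
    rwa [hLh] at this
  have hLiu : IsUnit L.det := by
    have h' := hL.isUnit
    rwa [Matrix.isUnit_iff_isUnit_det] at h'
  have hback : S - R = L⁻¹ * ((L * S * L) - (L * R * L)) * L⁻¹ := by
    rw [Matrix.mul_sub, Matrix.sub_mul]
    congr 1
    · calc S = (L⁻¹ * L) * S * (L * L⁻¹) := by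
            rw [Matrix.nonsing_inv_mul _ hLiu, Matrix.mul_nonsing_inv _ hLiu]; noncomm_ring
      _ = L⁻¹ * (L * S * L) * L⁻¹ := by noncomm_ring
    · calc R = (L⁻¹ * L) * R * (L * L⁻¹) := by
            rw [Matrix.nonsing_inv_mul _ hLiu, Matrix.mul_nonsing_inv _ hLiu]; noncomm_ring
      _ = L⁻¹ * (L * R * L) * L⁻¹ := by noncomm_ring
  rw [hback]
  have hLinv : (L⁻¹).PosDef := hL.inv
  have := hQP.mul_mul_conjTranspose_same L⁻¹
  rwa [hLinv.isHermitian.eq] at this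

lemma my_commute_inv {X Y : Matrix (Fin n) (Fin n) ℝ} (hY : IsUnit Y.det)
    (h : X * Y = Y * X) : X * Y⁻¹ = Y⁻¹ * X := by
  calc X * Y⁻¹ = (Y⁻¹ * Y) * X * Y⁻¹ := by rw [Matrix.nonsing_inv_mul _ hY]; noncomm_ring
  _ = Y⁻¹ * (X * Y) * Y⁻¹ := by rw [h]; noncomm_ring
  _ = Y⁻¹ * X * (Y * Y⁻¹) := by noncomm_ring
  _ = Y⁻¹ * X := by rw [Matrix.mul_nonsing_inv _ hY]; noncomm_ring

/-- For commuting positive definite `X`, `Y`: `(√X√Y) X⁻¹ (√X√Y) = Y`. -/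
lemma my_sqrt_pair_riccati {X Y : Matrix (Fin n) (Fin n) ℝ} (hX : X.PosDef) (hY : Y.PosDef)
    (hXY : X * Y = Y * X) :
    (hX.posSemidef.sqrt * hY.posSemidef.sqrt) * X⁻¹ *
      (hX.posSemidef.sqrt * hY.posSemidef.sqrt) = Y := by
  set sX := hX.posSemidef.sqrt with hsX
  set sY := hY.posSemidef.sqrt with hsY
  have hXdet : IsUnit X.det := by
    have h' := hX.isUnit
    rwa [Matrix.isUnit_iff_isUnit_det] at h'
  have c1 : Y * sX = sX * Y := my_commute_sqrt hX.posSemidef hXY.symm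
  have c2 : sX * sY = sY * sX := my_commute_sqrt hY.posSemidef c1.symm
  have c3 : sY * X = X * sY := (my_commute_sqrt hY.posSemidef hXY).symm
  have c4 : sY * X⁻¹ = X⁻¹ * sY := my_commute_inv hXdet c3
  have c5 : sX * X⁻¹ = X⁻¹ * sX := my_commute_inv hXdet (by
    rw [← hX.posSemidef.sqrt_mul_self]; noncomm_ring)
  have c6 : sX * X⁻¹ * sX = 1 := by
    rw [c5, Matrix.mul_assoc, hX.posSemidef.sqrt_mul_self, Matrix.nonsing_inv_mul _ hXdet]
  calc (sX * sY) * X⁻¹ * (sX * sY) = sX * (sY * X⁻¹) * sX * sY := by noncomm_ring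
  _ = sX * X⁻¹ * (sY * sX) * sY := by rw [c4]; noncomm_ring
  _ = sX * X⁻¹ * (sX * sY) * sY := by rw [c2]
  _ = (sX * X⁻¹ * sX) * (sY * sY) := by noncomm_ring
  _ = Y := by rw [c6, hY.posSemidef.sqrt_mul_self, Matrix.one_mul]

/-- For commuting positive semidefinite matrices, `√(XY) = √X √Y`. -/
lemma my_sqrt_mul {X Y : Matrix (Fin n) (Fin n) ℝ} (hX : X.PosSemidef) (hY : Y.PosSemidef)
    (h : X * Y = Y * X) (hXYp : (X * Y).PosSemidef) : hXYp.sqrt = hX.sqrt * hY.sqrt := by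
  have c1 : Y * hX.sqrt = hX.sqrt * Y := my_commute_sqrt hX h.symm
  have c2 : hX.sqrt * hY.sqrt = hY.sqrt * hX.sqrt := my_commute_sqrt hY c1.symm
  have hpsd : (hX.sqrt * hY.sqrt).PosSemidef :=
    my_mul_posSemidef hX.posSemidef_sqrt hY.posSemidef_sqrt c2
  refine (hpsd.eq_sqrt_of_sq_eq hXYp ?_).symm
  rw [pow_two]
  calc (hX.sqrt * hY.sqrt) * (hX.sqrt * hY.sqrt)
      = hX.sqrt * (hY.sqrt * hX.sqrt) * hY.sqrt := by noncomm_ring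
  _ = hX.sqrt * (hX.sqrt * hY.sqrt) * hY.sqrt := by rw [← c2]
  _ = (hX.sqrt * hX.sqrt) * (hY.sqrt * hY.sqrt) := by noncomm_ring
  _ = X * Y := by rw [hX.sqrt_mul_self, hY.sqrt_mul_self]

/-- strict monotonicity of the geometric mean: for commuting pairs of
symmetric positive definite matrices, `B - A > 0` and `D - C ≥ 0` imply
`√(BD) - √(AC) > 0`.  (`AC` and `BD` are symmetric positive definite, hence in
particular positive semidefinite, which gives meaning to the square roots.) -/
theorem sqrt_geometric_mean_strict_mono {n : ℕ}
    (A B C D : Matrix (Fin n) (Fin n) ℝ)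
    (hA : A.PosDef) (hB : B.PosDef) (hC : C.PosDef) (hD : D.PosDef)
    (hAC : A * C = C * A) (hBD : B * D = D * B)
    (hBA : (B - A).PosDef) (hDC : (D - C).PosSemidef) :
    ∀ (hACp : (A * C).PosSemidef) (hBDp : (B * D).PosSemidef),
      (hBDp.sqrt - hACp.sqrt).PosDef := by
  intro hACp hBDp
  set sD := hD.posSemidef.sqrt with hsD
  have hsDpd : sD.PosDef := my_sqrt_posDef hD
  have hsDdet : IsUnit sD.det := by
    have h' := hsDpd.isUnit
    rwa [Matrix.isUnit_iff_isUnit_det] at h'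
  have hDdet : IsUnit D.det := by
    have h' := hD.isUnit
    rwa [Matrix.isUnit_iff_isUnit_det] at h'
  have hAdet : IsUnit A.det := by
    have h' := hA.isUnit
    rwa [Matrix.isUnit_iff_isUnit_det] at h'
  -- Riccati relation for T := √(AC):  T * A⁻¹ * T = C
  have rT : hACp.sqrt * A⁻¹ * hACp.sqrt = C := by
    rw [my_sqrt_mul hA.posSemidef hC.posSemidef hAC hACp]
    exact my_sqrt_pair_riccati hA hC hAC
  -- Riccati relation for S := √(BD):  S * D⁻¹ * S = B
  have rS : hBDp.sqrt * D⁻¹ * hBDp.sqrt = B := by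
    have hDB : D * B = B * D := hBD.symm
    have hDBp : (D * B).PosSemidef := by rw [← hBD]; exact hBDp
    have key := my_sqrt_pair_riccati hD hB hDB
    have : hBDp.sqrt = hD.posSemidef.sqrt * hB.posSemidef.sqrt := by
      have e1 : hBDp.sqrt = hB.posSemidef.sqrt * hD.posSemidef.sqrt :=
        my_sqrt_mul hB.posSemidef hD.posSemidef hBD hBDp
      have c1 : D * hB.posSemidef.sqrt = hB.posSemidef.sqrt * D :=
        my_commute_sqrt hB.posSemidef hBD.symm
      have c2 : hB.posSemidef.sqrt * hD.posSemidef.sqrt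
          = hD.posSemidef.sqrt * hB.posSemidef.sqrt :=
        my_commute_sqrt hD.posSemidef c1.symm
      rw [e1, c2]
    rw [this]
    exact key
  -- the middle matrix R := √D * √(√D⁻¹ A √D⁻¹) * √D
  have hsDi : (sD⁻¹).PosDef := hsDpd.inv
  have hN : (sD⁻¹ * A * sD⁻¹).PosDef := by
    have := my_conj_posDef hA hsDi.isUnit
    rwa [hsDi.isHermitian.eq] at this
  set m := hN.posSemidef.sqrt with hm
  have hmpd : m.PosDef := my_sqrt_posDef hN
  obtain ⟨R, hR⟩ : ∃ R, R = sD * m * sD := ⟨_, rfl⟩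
  have hRpd : R.PosDef := by
    rw [hR]
    have := my_conj_posDef hmpd hsDpd.isUnit
    rwa [hsDpd.isHermitian.eq] at this
  have hRdet : IsUnit R.det := by
    have h' := hRpd.isUnit
    rwa [Matrix.isUnit_iff_isUnit_det] at h'
  -- D⁻¹ = sD⁻¹ * sD⁻¹ and cancellations
  have hDinv : D⁻¹ = sD⁻¹ * sD⁻¹ := by
    rw [← hD.posSemidef.sqrt_mul_self, Matrix.mul_inv_rev]
  have hcan1 : sD * sD⁻¹ = 1 := Matrix.mul_nonsing_inv _ hsDdet
  have hcan2 : sD⁻¹ * sD = 1 := Matrix.nonsing_inv_mul _ hsDdet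
  -- Riccati relation for R:  R * D⁻¹ * R = A
  have rR : R * D⁻¹ * R = A := by
    rw [hR, hDinv]
    calc sD * m * sD * (sD⁻¹ * sD⁻¹) * (sD * m * sD)
        = sD * m * (sD * sD⁻¹) * (sD⁻¹ * sD) * m * sD := by noncomm_ring
    _ = sD * (m * m) * sD := by rw [hcan1, hcan2]; noncomm_ring
    _ = sD * (sD⁻¹ * A * sD⁻¹) * sD := by rw [hN.posSemidef.sqrt_mul_self]
    _ = (sD * sD⁻¹) * A * (sD⁻¹ * sD) := by noncomm_ring
    _ = A := by rw [hcan1, hcan2, Matrix.one_mul, Matrix.mul_one]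
  -- second Riccati relation for R:  R * A⁻¹ * R = D
  have rR2 : R * A⁻¹ * R = D := by
    have hAinv : A⁻¹ = R⁻¹ * D * R⁻¹ := by
      refine Matrix.inv_eq_right_inv ?_
      calc A * (R⁻¹ * D * R⁻¹) = (R * D⁻¹) * (R * R⁻¹) * D * R⁻¹ := by
            rw [← rR]; noncomm_ring
      _ = R * (D⁻¹ * D) * R⁻¹ := by rw [Matrix.mul_nonsing_inv _ hRdet]; noncomm_ring
      _ = R * R⁻¹ := by rw [Matrix.nonsing_inv_mul _ hDdet]; noncomm_ring
      _ = 1 := Matrix.mul_nonsing_inv _ hRdet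
    rw [hAinv]
    calc R * (R⁻¹ * D * R⁻¹) * R = (R * R⁻¹) * D * (R⁻¹ * R) := by noncomm_ring
    _ = D := by
        rw [Matrix.mul_nonsing_inv _ hRdet, Matrix.nonsing_inv_mul _ hRdet,
          Matrix.one_mul, Matrix.mul_one]
  -- combine
  have h1 : (hBDp.sqrt - R).PosDef :=
    my_riccati_strict hD hRpd.posSemidef hBDp.posSemidef_sqrt rR rS hBA
  have h2 : (R - hACp.sqrt).PosSemidef :=
    my_riccati_mono hA hACp.posSemidef_sqrt hRpd.posSemidef rT rR2 hDC
  have hsplit : hBDp.sqrt - hACp.sqrt = (hBDp.sqrt - R) + (R - hACp.sqrt) := by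
    noncomm_ring
  rw [hsplit]
  exact h1.add_posSemidef h2
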